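/- Let α ≥ y ≥ 2 be real numbers. Then M(α;y) ≥ 10π·α^{5/2}·y^{−3/2}·e^{−πα/y}. -/

import Mathlib

open Real

/-- The one-dimensional theta function `ϑ(X;Y) = 1 + 2 Σ_{n≥1} e^{−πn²X} cos(2πnY)`. -/
noncomputable def vtheta (X Y : ℝ) : ℝ :=
  1 + 2 * ∑' n : ℕ, Real.exp (-π * ((n : ℝ) + 1) ^ 2 * X) * Real.cos (2 * π * ((n : ℝ) + 1) * Y)

/-- `ϑ_Y`, the partial derivative of `ϑ` in `Y`. -/
noncomputable def vthetaY (X Y : ℝ) : ℝ := deriv (fun y => vtheta X y) Y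

/-- `ϑ_X`, the partial derivative of `ϑ` in `X`. -/
noncomputable def vthetaX (X Y : ℝ) : ℝ := deriv (fun x => vtheta x Y) X

/-- `ϑ_XY`, the mixed second partial derivative of `ϑ`. -/
noncomputable def vthetaXY (X Y : ℝ) : ℝ := deriv (fun x => vthetaY x Y) X

/-- `M₁(α;y) = 2√2·α·ϑ(y/α;0) − 2α·ϑ(y/(2α);0)`. -/
noncomputable def M1 (α y : ℝ) : ℝ :=
  2 * Real.sqrt 2 * α * vtheta (y / α) 0 - 2 * α * vtheta (y / (2 * α)) 0

/-- `M₂(α;y) = 4√2·y·ϑ_X(y/α;0) − 2y·ϑ_X(y/(2α);0)`. -/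
noncomputable def M2 (α y : ℝ) : ℝ :=
  4 * Real.sqrt 2 * y * vthetaX (y / α) 0 - 2 * y * vthetaX (y / (2 * α)) 0

/-- `M₃(α;y) = 4√2·α(1+2παy)e^{−παy}ϑ(y/α;1/2) − 4α(1+4παy)e^{−2παy}ϑ(y/(2α);1/2)`. -/
noncomputable def M3 (α y : ℝ) : ℝ :=
  4 * Real.sqrt 2 * α * (1 + 2 * π * α * y) * Real.exp (-π * α * y) * vtheta (y / α) (1 / 2) -
    4 * α * (1 + 4 * π * α * y) * Real.exp (-2 * π * α * y) * vtheta (y / (2 * α)) (1 / 2)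

/-- `M₄(α;y) = 8√2·y·e^{−παy}·ϑ_X(y/α;1/2) − 4y·e^{−2παy}·ϑ_X(y/(2α);1/2)`. -/
noncomputable def M4 (α y : ℝ) : ℝ :=
  8 * Real.sqrt 2 * y * Real.exp (-π * α * y) * vthetaX (y / α) (1 / 2) -
    4 * y * Real.exp (-2 * π * α * y) * vthetaX (y / (2 * α)) (1 / 2)

/-- `M = M₁ + M₂ + M₃ + M₄`. -/
noncomputable def Mfun (α y : ℝ) : ℝ := M1 α y + M2 α y + M3 α y + M4 α y


/-! ### Auxiliary definitions and lemmas -/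

/-- The termwise `X`-derivative series of `ϑ`. -/
noncomputable def Dser (X Y : ℝ) : ℝ :=
  2 * ∑' n : ℕ, (-π * ((n : ℝ) + 1) ^ 2 * Real.exp (-π * ((n : ℝ) + 1) ^ 2 * X)
      * Real.cos (2 * π * ((n : ℝ) + 1) * Y))

lemma summable_aux (k : ℕ) {X : ℝ} (hX : 0 < X) :
    Summable (fun n : ℕ => ((n : ℝ) + 1) ^ k * Real.exp (-π * ((n : ℝ) + 1) ^ 2 * X)) := by
  have hr : ‖Real.exp (-π * X)‖ < 1 := by
    rw [Real.norm_eq_abs, abs_of_pos (Real.exp_pos _)]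
    exact Real.exp_lt_one_iff.mpr (by nlinarith [Real.pi_pos])
  have h := (summable_pow_mul_geometric_of_norm_lt_one k hr).comp_injective Nat.succ_injective
  refine h.of_nonneg_of_le (fun n => by positivity) (fun n => ?_)
  simp only [Function.comp]
  have h1 : Real.exp (-π * ((n : ℝ) + 1) ^ 2 * X) ≤ Real.exp (-π * X) ^ (n + 1) := by
    rw [← Real.exp_nat_mul]
    apply Real.exp_le_exp.mpr
    have h0 : (0 : ℝ) ≤ (n : ℝ) := Nat.cast_nonneg n
    push_cast
    nlinarith [mul_nonneg (mul_pos Real.pi_pos hX).le (mul_nonneg h0 (by linarith : (0:ℝ) ≤ (n:ℝ)+1))]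
  calc ((n : ℝ) + 1) ^ k * Real.exp (-π * ((n : ℝ) + 1) ^ 2 * X)
      ≤ ((n : ℝ) + 1) ^ k * Real.exp (-π * X) ^ (n + 1) := by
        apply mul_le_mul_of_nonneg_left h1 (by positivity)
    _ = (((n + 1 : ℕ) : ℝ)) ^ k * Real.exp (-π * X) ^ (n + 1) := by push_cast; ring

lemma summable_theta {X : ℝ} (hX : 0 < X) (Y : ℝ) :
    Summable (fun n : ℕ => Real.exp (-π * ((n : ℝ) + 1) ^ 2 * X)
      * Real.cos (2 * π * ((n : ℝ) + 1) * Y)) := by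
  refine (summable_aux 0 hX).of_norm_bounded (fun n => ?_)
  rw [norm_mul, Real.norm_eq_abs, Real.norm_eq_abs, abs_of_pos (Real.exp_pos _), pow_zero, one_mul]
  calc Real.exp (-π * ((n : ℝ) + 1) ^ 2 * X) * |Real.cos (2 * π * ((n : ℝ) + 1) * Y)|
      ≤ Real.exp (-π * ((n : ℝ) + 1) ^ 2 * X) * 1 :=
        mul_le_mul_of_nonneg_left (Real.abs_cos_le_one _) (Real.exp_pos _).le
    _ = _ := mul_one _

lemma summable_theta_deriv {X : ℝ} (hX : 0 < X) (Y : ℝ) :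
    Summable (fun n : ℕ => -π * ((n : ℝ) + 1) ^ 2 * Real.exp (-π * ((n : ℝ) + 1) ^ 2 * X)
      * Real.cos (2 * π * ((n : ℝ) + 1) * Y)) := by
  refine ((summable_aux 2 hX).mul_left π).of_norm_bounded (fun n => ?_)
  have h1 : |Real.cos (2 * π * ((n : ℝ) + 1) * Y)| ≤ 1 := Real.abs_cos_le_one _
  have h2 : (0:ℝ) < π := Real.pi_pos
  rw [norm_mul, norm_mul, Real.norm_eq_abs, Real.norm_eq_abs, Real.norm_eq_abs,
    abs_of_pos (Real.exp_pos _)]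
  have hnp : -π * ((n : ℝ) + 1) ^ 2 ≤ 0 := by nlinarith [Real.pi_pos, sq_nonneg ((n:ℝ)+1)]
  rw [abs_of_nonpos hnp]
  have hg : -(-π * ((n : ℝ) + 1) ^ 2) = π * ((n : ℝ) + 1) ^ 2 := by ring
  rw [hg]
  calc π * ((n : ℝ) + 1) ^ 2 * Real.exp (-π * ((n : ℝ) + 1) ^ 2 * X)
        * |Real.cos (2 * π * ((n : ℝ) + 1) * Y)|
      ≤ π * ((n : ℝ) + 1) ^ 2 * Real.exp (-π * ((n : ℝ) + 1) ^ 2 * X) * 1 := by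
        apply mul_le_mul_of_nonneg_left h1 (by positivity)
    _ = π * (((n : ℝ) + 1) ^ 2 * Real.exp (-π * ((n : ℝ) + 1) ^ 2 * X)) := by ring

set_option maxHeartbeats 1000000 in
lemma hasDerivAt_vtheta (Y : ℝ) {X : ℝ} (hX : 0 < X) :
    HasDerivAt (fun x => vtheta x Y) (Dser X Y) X := by
  have key : HasDerivAt (fun x => ∑' n : ℕ, Real.exp (-π * ((n : ℝ) + 1) ^ 2 * x)
      * Real.cos (2 * π * ((n : ℝ) + 1) * Y))
      (∑' n : ℕ, (-π * ((n : ℝ) + 1) ^ 2 * Real.exp (-π * ((n : ℝ) + 1) ^ 2 * X)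
      * Real.cos (2 * π * ((n : ℝ) + 1) * Y))) X := by
    have hX2 : 0 < X / 2 := by linarith
    refine hasDerivAt_tsum_of_isPreconnected
      (u := fun n : ℕ => π * (((n : ℝ) + 1) ^ 2 * Real.exp (-π * ((n : ℝ) + 1) ^ 2 * (X/2))))
      (t := Set.Ioi (X/2)) (y₀ := X) (y := X)
      (g := fun n x => Real.exp (-π * ((n : ℝ) + 1) ^ 2 * x) * Real.cos (2 * π * ((n : ℝ) + 1) * Y))
      (g' := fun n x => -π * ((n : ℝ) + 1) ^ 2 * Real.exp (-π * ((n : ℝ) + 1) ^ 2 * x)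
      * Real.cos (2 * π * ((n : ℝ) + 1) * Y))
      ((summable_aux 2 hX2).mul_left π) isOpen_Ioi isPreconnected_Ioi
      (fun n x _ => ?_) (fun n x hx => ?_) (Set.mem_Ioi.mpr (by linarith)) ?_
      (Set.mem_Ioi.mpr (by linarith))
    · have h1 : HasDerivAt (fun x : ℝ => -π * ((n : ℝ) + 1) ^ 2 * x)
        (-π * ((n : ℝ) + 1) ^ 2) x :=
        ((hasDerivAt_id x).const_mul (-π * ((n : ℝ) + 1) ^ 2)).congr_deriv (mul_one _)
      exact (h1.exp.mul_const (Real.cos (2 * π * ((n : ℝ) + 1) * Y))).congr_deriv (by ring)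
    · -- norm bound
      have h1 : |Real.cos (2 * π * ((n : ℝ) + 1) * Y)| ≤ 1 := Real.abs_cos_le_one _
      have hnp : -π * ((n : ℝ) + 1) ^ 2 ≤ 0 := by nlinarith [Real.pi_pos, sq_nonneg ((n:ℝ)+1)]
      rw [norm_mul, norm_mul, Real.norm_eq_abs, Real.norm_eq_abs, Real.norm_eq_abs,
        abs_of_pos (Real.exp_pos _), abs_of_nonpos hnp]
      have hg : -(-π * ((n : ℝ) + 1) ^ 2) = π * ((n : ℝ) + 1) ^ 2 := by ring
      rw [hg]
      show π * ((n : ℝ) + 1) ^ 2 * Real.exp (-π * ((n : ℝ) + 1) ^ 2 * x)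
            * |Real.cos (2 * π * ((n : ℝ) + 1) * Y)|
          ≤ π * (((n : ℝ) + 1) ^ 2 * Real.exp (-π * ((n : ℝ) + 1) ^ 2 * (X/2)))
      have hexp : Real.exp (-π * ((n : ℝ) + 1) ^ 2 * x) ≤
          Real.exp (-π * ((n : ℝ) + 1) ^ 2 * (X / 2)) := by
        apply Real.exp_le_exp.mpr
        exact mul_le_mul_of_nonpos_left (Set.mem_Ioi.mp hx).le hnp
      calc π * ((n : ℝ) + 1) ^ 2 * Real.exp (-π * ((n : ℝ) + 1) ^ 2 * x)
            * |Real.cos (2 * π * ((n : ℝ) + 1) * Y)|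
          ≤ π * ((n : ℝ) + 1) ^ 2 * Real.exp (-π * ((n : ℝ) + 1) ^ 2 * (X/2)) * 1 := by
            apply mul_le_mul (mul_le_mul_of_nonneg_left hexp (by positivity)) h1
              (abs_nonneg _) (by positivity)
        _ = π * (((n : ℝ) + 1) ^ 2 * Real.exp (-π * ((n : ℝ) + 1) ^ 2 * (X/2))) := by ring
    · simpa using summable_theta hX Y
  have h2 := ((key.const_mul 2).const_add 1)
  unfold vtheta Dser
  exact h2

open Complex in
lemma vtheta_complex {X : ℝ} (hX : 0 < X) :
    (vtheta X 0 : ℂ) = jacobiTheta (X * Complex.I) := by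
  have him : 0 < (X * Complex.I).im := by simp [hX]
  rw [jacobiTheta_eq_tsum_nat him]
  unfold vtheta
  push_cast
  congr 1
  congr 1
  refine tsum_congr (fun n => ?_)
  rw [show (2 * (π:ℂ) * ((n:ℂ) + 1) * 0) = 0 by ring, Complex.cos_zero, mul_one,
    show (↑π * Complex.I * ((n : ℂ) + 1) ^ 2 * (↑X * Complex.I))
      = (Complex.I * Complex.I) * (↑π * ((n:ℂ)+1)^2 * ↑X) by ring, Complex.I_mul_I,
    show (-1 : ℂ) * (↑π * ((n:ℂ)+1)^2 * ↑X) = -↑π * ((n:ℂ)+1)^2 * ↑X by ring]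

open Complex in
lemma vtheta_jacobi {X : ℝ} (hX : 0 < X) :
    vtheta X⁻¹ 0 = Real.sqrt X * vtheta X 0 := by
  have hXne : (X : ℂ) ≠ 0 := Complex.ofReal_ne_zero.mpr hX.ne'
  have him : 0 < (X * Complex.I).im := by simp [hX]
  set τ : UpperHalfPlane := ⟨X * Complex.I, him⟩ with hτ
  have hS := jacobiTheta_S_smul τ
  have hcoe : ((ModularGroup.S • τ : UpperHalfPlane) : ℂ) = (X⁻¹ : ℝ) * Complex.I := by
    rw [UpperHalfPlane.modular_S_smul]
    simp only [UpperHalfPlane.coe_mk]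
    rw [show (τ : ℂ) = X * Complex.I from rfl]
    rw [inv_neg, mul_inv, Complex.inv_I]
    push_cast
    field_simp
  have hpow : (-Complex.I * (τ : ℂ)) ^ ((1:ℂ) / 2) = (Real.sqrt X : ℂ) := by
    have h1 : (-Complex.I * (τ : ℂ)) = ((X : ℝ) : ℂ) := by
      rw [show (τ : ℂ) = X * Complex.I from rfl]
      rw [show -Complex.I * (X * Complex.I) = -(Complex.I * Complex.I) * X by ring]
      rw [Complex.I_mul_I]
      push_cast; ring
    rw [h1, show ((1:ℂ)/2) = ((1/2 : ℝ) : ℂ) by norm_num,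
      ← Complex.ofReal_cpow hX.le, Real.sqrt_eq_rpow]
  rw [hcoe, hpow] at hS
  have h2 : ((vtheta X⁻¹ 0 : ℝ) : ℂ) = ((Real.sqrt X * vtheta X 0 : ℝ) : ℂ) := by
    rw [vtheta_complex (inv_pos.mpr hX), hS,
      show ((τ : UpperHalfPlane) : ℂ) = (X : ℂ) * Complex.I from rfl, ← vtheta_complex hX]
    push_cast
    ring
  exact_mod_cast h2

lemma vthetaX_eq {X : ℝ} (hX : 0 < X) (Y : ℝ) : vthetaX X Y = Dser X Y :=
  (hasDerivAt_vtheta Y hX).deriv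

lemma Dser_jacobi {t : ℝ} (ht : 0 < t) :
    Dser t⁻¹ 0 = -(t * Real.sqrt t / 2) * vtheta t 0 - t ^ 2 * Real.sqrt t * Dser t 0 := by
  have hst : 0 < Real.sqrt t := Real.sqrt_pos.mpr ht
  have hss : Real.sqrt t * Real.sqrt t = t := Real.mul_self_sqrt ht.le
  have hF1 : HasDerivAt (fun x : ℝ => vtheta x⁻¹ 0) (Dser t⁻¹ 0 * (-(t ^ 2)⁻¹)) t :=
    (hasDerivAt_vtheta 0 (inv_pos.mpr ht)).comp t (hasDerivAt_inv ht.ne')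
  have hF2 : HasDerivAt (fun x : ℝ => Real.sqrt x * vtheta x 0)
      (1 / (2 * Real.sqrt t) * vtheta t 0 + Real.sqrt t * Dser t 0) t :=
    (Real.hasDerivAt_sqrt ht.ne').mul (hasDerivAt_vtheta 0 ht)
  have heq : (fun x : ℝ => vtheta x⁻¹ 0) =ᶠ[nhds t] (fun x : ℝ => Real.sqrt x * vtheta x 0) :=
    Filter.eventually_of_mem (Ioi_mem_nhds ht) (fun x hx => vtheta_jacobi (Set.mem_Ioi.mp hx))
  have hF1' : HasDerivAt (fun x : ℝ => Real.sqrt x * vtheta x 0)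
      (Dser t⁻¹ 0 * (-(t ^ 2)⁻¹)) t := hF1.congr_of_eventuallyEq heq.symm
  have hE := hF1'.unique hF2
  field_simp at hE
  rw [show (1:ℝ)/t = t⁻¹ from one_div t] at hE
  refine mul_right_cancel₀ (show (2 * Real.sqrt t) ≠ 0 by positivity) ?_
  linear_combination (-1) * hE + (vtheta t 0 * t) * hss

lemma M12_eq (α y : ℝ) (hy : 0 < y) (hα : 0 < α) :
    M1 α y + M2 α y = 4 * Real.sqrt 2 * y * (α / y) ^ 2 * Real.sqrt (α / y) *
      (2 * Dser (2 * (α / y)) 0 - Dser (α / y) 0) := by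
  set t := α / y with hts
  have ht : 0 < t := by positivity
  have h2t : 0 < 2 * t := by positivity
  have hya : y / α = t⁻¹ := by rw [hts, inv_div]
  have hy2a : y / (2 * α) = (2 * t)⁻¹ := by
    rw [hts, show 2 * (α / y) = (2 * α) / y from by ring, inv_div]
  have hαyt : α = y * t := by rw [hts]; field_simp
  have hsqrt2t : Real.sqrt (2 * t) = Real.sqrt 2 * Real.sqrt t := Real.sqrt_mul (by norm_num) t
  have hss : Real.sqrt t * Real.sqrt t = t := Real.mul_self_sqrt ht.le
  have hs2 : Real.sqrt 2 * Real.sqrt 2 = 2 := Real.mul_self_sqrt (by norm_num)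
  rw [M1, M2, hya, hy2a, vthetaX_eq (inv_pos.mpr ht) 0, vthetaX_eq (inv_pos.mpr h2t) 0,
    vtheta_jacobi ht, vtheta_jacobi h2t, Dser_jacobi ht, Dser_jacobi h2t, hsqrt2t]
  rw [hαyt]
  ring

lemma vcos_half (n : ℕ) : Real.cos (2 * π * ((n : ℝ) + 1) * (1/2)) = (-1) ^ (n+1) := by
  have h : 2 * π * ((n : ℝ) + 1) * (1/2) = ((n+1 : ℕ) : ℝ) * π - 0 := by push_cast; ring
  rw [h, Real.cos_nat_mul_pi_sub, Real.cos_zero, mul_one]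

-- |vtheta X (1/2)| ≤ 1
lemma vtheta_half_le {X : ℝ} (hX : 0 < X) : |vtheta X (1/2)| ≤ 1 := by
  set f : ℕ → ℝ := fun n => Real.exp (-π * ((n : ℝ) + 1) ^ 2 * X)
    * Real.cos (2 * π * ((n : ℝ) + 1) * (1/2)) with hf
  have hfs : Summable f := summable_theta hX (1/2)
  have hfval : ∀ n : ℕ, f n = (-1) ^ (n+1) * Real.exp (-π * ((n : ℝ) + 1) ^ 2 * X) := by
    intro n; rw [hf]; simp only []; rw [vcos_half]; ring
  have hmono : ∀ m n : ℕ, m ≤ n → Real.exp (-π * ((n : ℝ) + 1) ^ 2 * X)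
      ≤ Real.exp (-π * ((m : ℝ) + 1) ^ 2 * X) := by
    intro m n hmn
    apply Real.exp_le_exp.mpr
    have h1 : ((m : ℝ) + 1) ≤ ((n : ℝ) + 1) := by exact_mod_cast by omega
    have hsq : ((m:ℝ)+1)^2 ≤ ((n:ℝ)+1)^2 := by nlinarith [Nat.cast_nonneg (α := ℝ) m]
    nlinarith [mul_nonneg (mul_pos Real.pi_pos hX).le (sub_nonneg.mpr hsq)]
  have hpair : ∀ k : ℕ, f (2*k) + f (2*k+1) ≤ 0 := by
    intro k
    rw [hfval, hfval]
    have h1 := hmono (2*k) (2*k+1) (by omega)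
    have e1 : ((-1 : ℝ)) ^ (2*k+1) = -1 := Odd.neg_one_pow ⟨k, by ring⟩
    have e2 : ((-1 : ℝ)) ^ (2*k+1+1) = 1 := Even.neg_one_pow ⟨k+1, by ring⟩
    rw [e1, e2]
    push_cast at h1 ⊢
    linarith
  have hpair2 : ∀ k : ℕ, 0 ≤ f (2*k+1) + f (2*k+1+1) := by
    intro k
    rw [hfval, hfval]
    have h1 := hmono (2*k+1) (2*k+1+1) (by omega)
    have e1 : ((-1 : ℝ)) ^ (2*k+1+1) = 1 := Even.neg_one_pow ⟨k+1, by ring⟩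
    have e2 : ((-1 : ℝ)) ^ (2*k+1+1+1) = -1 := Odd.neg_one_pow ⟨k+1, by ring⟩
    rw [e1, e2]
    push_cast at h1 ⊢
    linarith
  have heven : Summable (fun k : ℕ => f (2 * k)) :=
    hfs.comp_injective (fun a b h => by omega)
  have hodd : Summable (fun k : ℕ => f (2 * k + 1)) :=
    hfs.comp_injective (fun a b h => by omega)
  have hupper : ∑' n, f n ≤ 0 := by
    rw [← tsum_even_add_odd heven hodd, ← Summable.tsum_add heven hodd]
    exact tsum_nonpos hpair
  have hlower : -Real.exp (-π * X) ≤ ∑' n, f n := by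
    rw [Summable.tsum_eq_zero_add hfs]
    have h0 : f 0 = -Real.exp (-π * X) := by
      rw [hfval]; norm_num
    rw [h0]
    have hg : Summable (fun n : ℕ => f (n + 1)) :=
      hfs.comp_injective (fun a b h => by omega)
    have hge : Summable (fun k : ℕ => f (2 * k + 1)) := hodd
    have hgo : Summable (fun k : ℕ => f (2 * k + 1 + 1)) :=
      hfs.comp_injective (fun a b h => by omega)
    have htail : 0 ≤ ∑' n, f (n + 1) := by
      have hsplit := tsum_even_add_odd (f := fun n => f (n+1))
        (by simpa [Nat.add_comm] using hge) (by simpa [Nat.add_comm] using hgo)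
      rw [← hsplit, ← Summable.tsum_add (by simpa using hge) (by simpa using hgo)]
      exact tsum_nonneg (fun k => hpair2 k)
    linarith
  have hexp : Real.exp (-π * X) ≤ 1 :=
    Real.exp_le_one_iff.mpr (by nlinarith [Real.pi_pos])
  have hv : vtheta X (1/2) = 1 + 2 * ∑' n, f n := rfl
  rw [hv, abs_le]
  constructor <;> nlinarith [hupper, hlower, hexp]

lemma sq_le_exp {u : ℝ} (hu : 0 ≤ u) : u ^ 2 ≤ Real.exp u := by
  have h := Real.sum_le_exp_of_nonneg hu 4
  simp only [Finset.sum_range_succ, Finset.sum_range_zero, Nat.factorial] at h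
  norm_num at h
  nlinarith [h, mul_nonneg hu (sq_nonneg (u - 3/2))]

-- geometric tail: ∑ exp(-(c)(n+1)) ≤ 1/c
lemma tsum_exp_le {c : ℝ} (hc : 0 < c) :
    ∑' n : ℕ, Real.exp (-(c * ((n : ℝ) + 1))) ≤ 1 / c := by
  have hr0 : (0:ℝ) ≤ Real.exp (-c) := (Real.exp_pos _).le
  have hr1 : Real.exp (-c) < 1 := Real.exp_lt_one_iff.mpr (by linarith)
  have hgeom : ∀ n : ℕ, Real.exp (-(c * ((n : ℝ) + 1))) = Real.exp (-c) ^ (n+1) := by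
    intro n
    rw [← Real.exp_nat_mul]
    congr 1
    push_cast; ring
  calc ∑' n : ℕ, Real.exp (-(c * ((n : ℝ) + 1)))
      = ∑' n : ℕ, Real.exp (-c) * Real.exp (-c) ^ n := by
        refine tsum_congr (fun n => ?_); rw [hgeom, pow_succ]; ring
    _ = Real.exp (-c) * (1 - Real.exp (-c))⁻¹ := by
        rw [tsum_mul_left, tsum_geometric_of_lt_one hr0 hr1]
    _ ≤ 1 / c := by
        rw [div_eq_mul_inv, one_mul]
        have h2 : 0 < 1 - Real.exp (-c) := by linarith
        rw [mul_inv_le_iff₀ h2, ← Real.exp_zero]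
        have h3 : c * Real.exp (-c) + Real.exp (-c) ≤ 1 := by
          have h4 := Real.add_one_le_exp c
          have h5 : Real.exp (-c) = (Real.exp c)⁻¹ := Real.exp_neg c
          have h6 : (c + 1) / Real.exp c ≤ 1 := (div_le_one (Real.exp_pos c)).mpr h4
          rw [div_eq_mul_inv] at h6
          calc c * Real.exp (-c) + Real.exp (-c) = (c + 1) * (Real.exp c)⁻¹ := by rw [h5]; ring
            _ ≤ 1 := h6
        rw [Real.exp_zero]
        calc c⁻¹ * (1 - Real.exp (-c)) ≥ c⁻¹ * (c * Real.exp (-c)) := by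
              apply mul_le_mul_of_nonneg_left _ (by positivity)
              linarith
          _ = Real.exp (-c) := by field_simp
  -- done

lemma tsum_sq_exp_le {c : ℝ} (hc : 0 < c) :
    ∑' n : ℕ, ((n : ℝ) + 1) ^ 2 * Real.exp (-(c * ((n : ℝ) + 1) ^ 2)) ≤ 8 / c ^ 3 := by
  have hc2 : 0 < c / 2 := by linarith
  have hterm : ∀ n : ℕ, ((n : ℝ) + 1) ^ 2 * Real.exp (-(c * ((n : ℝ) + 1) ^ 2))
      ≤ (4 / c ^ 2) * Real.exp (-(c / 2 * ((n : ℝ) + 1))) := by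
    intro n
    have hn1 : (1:ℝ) ≤ (n : ℝ) + 1 := by
      have : (0:ℝ) ≤ (n:ℝ) := Nat.cast_nonneg n
      linarith
    have hstep1 : Real.exp (-(c * ((n : ℝ) + 1) ^ 2)) ≤ Real.exp (-(c * ((n : ℝ) + 1))) := by
      apply Real.exp_le_exp.mpr
      nlinarith [mul_nonneg hc.le (mul_nonneg (sub_nonneg.mpr hn1)
        (by linarith : (0:ℝ) ≤ (n:ℝ)+1))]
    have hsplit : Real.exp (-(c * ((n : ℝ) + 1)))
        = Real.exp (-(c / 2 * ((n : ℝ) + 1))) * Real.exp (-(c / 2 * ((n : ℝ) + 1))) := by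
      rw [← Real.exp_add]; congr 1; ring
    have hu : ((n : ℝ) + 1) ^ 2 * Real.exp (-(c / 2 * ((n : ℝ) + 1))) ≤ 4 / c ^ 2 := by
      have h2 := sq_le_exp (show (0:ℝ) ≤ c / 2 * ((n : ℝ) + 1) by positivity)
      have h3 : Real.exp (-(c / 2 * ((n : ℝ) + 1))) = (Real.exp (c / 2 * ((n : ℝ) + 1)))⁻¹ :=
        Real.exp_neg _
      rw [h3]
      rw [mul_inv_le_iff₀ (Real.exp_pos _)]
      calc ((n : ℝ) + 1) ^ 2 = (4 / c^2) * ((c/2 * ((n:ℝ)+1))^2) / ((n:ℝ)+1) ^ 0 := by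
            field_simp; ring
        _ ≤ (4 / c ^ 2) * Real.exp (c / 2 * ((n : ℝ) + 1)) := by
            rw [pow_zero, div_one]
            apply mul_le_mul_of_nonneg_left h2 (by positivity)
    calc ((n : ℝ) + 1) ^ 2 * Real.exp (-(c * ((n : ℝ) + 1) ^ 2))
        ≤ ((n : ℝ) + 1) ^ 2 * Real.exp (-(c * ((n : ℝ) + 1))) := by
          apply mul_le_mul_of_nonneg_left hstep1 (by positivity)
      _ = (((n : ℝ) + 1) ^ 2 * Real.exp (-(c / 2 * ((n : ℝ) + 1))))
          * Real.exp (-(c / 2 * ((n : ℝ) + 1))) := by rw [hsplit]; ring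
      _ ≤ (4 / c ^ 2) * Real.exp (-(c / 2 * ((n : ℝ) + 1))) := by
          apply mul_le_mul_of_nonneg_right hu (Real.exp_pos _).le
  have hsummable : Summable (fun n : ℕ => ((n : ℝ) + 1) ^ 2 * Real.exp (-(c * ((n : ℝ) + 1) ^ 2))) := by
    have hX : 0 < c / π := div_pos hc Real.pi_pos
    have := summable_aux 2 hX
    refine this.congr (fun n => ?_)
    congr 1
    congr 1
    field_simp
  have hsummable2 : Summable (fun n : ℕ => Real.exp (-(c / 2 * ((n : ℝ) + 1)))) := by
    have hr0 : (0:ℝ) ≤ Real.exp (-(c/2)) := (Real.exp_pos _).le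
    have hr1 : Real.exp (-(c/2)) < 1 := Real.exp_lt_one_iff.mpr (by linarith)
    refine ((summable_geometric_of_lt_one hr0 hr1).mul_left (Real.exp (-(c/2)))).congr (fun n => ?_)
    rw [← pow_succ']
    rw [← Real.exp_nat_mul]
    congr 1
    push_cast; ring
  calc ∑' n : ℕ, ((n : ℝ) + 1) ^ 2 * Real.exp (-(c * ((n : ℝ) + 1) ^ 2))
      ≤ ∑' n : ℕ, (4 / c ^ 2) * Real.exp (-(c / 2 * ((n : ℝ) + 1))) :=
        Summable.tsum_le_tsum hterm hsummable (hsummable2.mul_left _)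
    _ = (4 / c ^ 2) * ∑' n : ℕ, Real.exp (-(c / 2 * ((n : ℝ) + 1))) := tsum_mul_left
    _ ≤ (4 / c ^ 2) * (1 / (c / 2)) := by
        apply mul_le_mul_of_nonneg_left (tsum_exp_le hc2) (by positivity)
    _ = 8 / c ^ 3 := by field_simp; ring

lemma Dser_abs_le {X : ℝ} (hX : 0 < X) (Y : ℝ) : |Dser X Y| ≤ 16 / (π ^ 2 * X ^ 3) := by
  have hsum := summable_theta_deriv hX Y
  have habs : Summable (fun n : ℕ => ‖-π * ((n : ℝ) + 1) ^ 2 * Real.exp (-π * ((n : ℝ) + 1) ^ 2 * X)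
      * Real.cos (2 * π * ((n : ℝ) + 1) * Y)‖) := by
    refine (summable_aux 2 hX).mul_left π |>.of_nonneg_of_le (fun n => norm_nonneg _) (fun n => ?_)
    rw [norm_mul, norm_mul, Real.norm_eq_abs, Real.norm_eq_abs, Real.norm_eq_abs,
      abs_of_pos (Real.exp_pos _), abs_of_nonpos (by nlinarith [Real.pi_pos, sq_nonneg ((n:ℝ)+1)] :
        -π * ((n : ℝ) + 1) ^ 2 ≤ 0)]
    have h1 : |Real.cos (2 * π * ((n : ℝ) + 1) * Y)| ≤ 1 := Real.abs_cos_le_one _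
    have h2 : (0:ℝ) < Real.exp (-π * ((n : ℝ) + 1) ^ 2 * X) := Real.exp_pos _
    nlinarith [mul_le_mul_of_nonneg_left h1
      (mul_nonneg (mul_nonneg Real.pi_pos.le (sq_nonneg ((n:ℝ)+1))) h2.le)]
  rw [Dser, abs_mul, abs_of_nonneg (by norm_num : (0:ℝ) ≤ 2)]
  have hb := norm_tsum_le_tsum_norm habs
  rw [Real.norm_eq_abs] at hb
  have hc : ∑' n : ℕ, ‖-π * ((n : ℝ) + 1) ^ 2 * Real.exp (-π * ((n : ℝ) + 1) ^ 2 * X)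
      * Real.cos (2 * π * ((n : ℝ) + 1) * Y)‖ ≤ π * (8 / (π * X) ^ 3) := by
    have key := tsum_sq_exp_le (mul_pos Real.pi_pos hX)
    calc ∑' n : ℕ, ‖-π * ((n : ℝ) + 1) ^ 2 * Real.exp (-π * ((n : ℝ) + 1) ^ 2 * X)
        * Real.cos (2 * π * ((n : ℝ) + 1) * Y)‖
        ≤ ∑' n : ℕ, π * (((n : ℝ) + 1) ^ 2 * Real.exp (-(π * X * ((n : ℝ) + 1) ^ 2))) := by
          refine Summable.tsum_le_tsum (fun n => ?_) habs ?_
          · rw [norm_mul, norm_mul, Real.norm_eq_abs, Real.norm_eq_abs, Real.norm_eq_abs,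
              abs_of_pos (Real.exp_pos _),
              abs_of_nonpos (by nlinarith [Real.pi_pos, sq_nonneg ((n:ℝ)+1)] :
                -π * ((n : ℝ) + 1) ^ 2 ≤ 0)]
            have h1 : |Real.cos (2 * π * ((n : ℝ) + 1) * Y)| ≤ 1 := Real.abs_cos_le_one _
            have h2 : (0:ℝ) < Real.exp (-π * ((n : ℝ) + 1) ^ 2 * X) := Real.exp_pos _
            have h3 : -(π * X * ((n:ℝ)+1)^2) = -π * ((n : ℝ) + 1) ^ 2 * X := by ring
            rw [h3]
            nlinarith [mul_le_mul_of_nonneg_left h1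
              (mul_nonneg (mul_nonneg Real.pi_pos.le (sq_nonneg ((n:ℝ)+1))) h2.le)]
          · have hX' : 0 < π * X := mul_pos Real.pi_pos hX
            have := summable_aux 2 hX
            refine (this.mul_left π).congr (fun n => ?_)
            congr 2
            ring
      _ = π * ∑' n : ℕ, ((n : ℝ) + 1) ^ 2 * Real.exp (-(π * X * ((n : ℝ) + 1) ^ 2)) :=
          tsum_mul_left
      _ ≤ π * (8 / (π * X) ^ 3) := by
          apply mul_le_mul_of_nonneg_left _ Real.pi_pos.le
          exact key
  have hfin : 2 * |∑' n : ℕ, (-π * ((n : ℝ) + 1) ^ 2 * Real.exp (-π * ((n : ℝ) + 1) ^ 2 * X)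
      * Real.cos (2 * π * ((n : ℝ) + 1) * Y))| ≤ 2 * (π * (8 / (π * X) ^ 3)) := by
    apply mul_le_mul_of_nonneg_left (hb.trans hc) (by norm_num)
  calc 2 * |∑' n : ℕ, (-π * ((n : ℝ) + 1) ^ 2 * Real.exp (-π * ((n : ℝ) + 1) ^ 2 * X)
      * Real.cos (2 * π * ((n : ℝ) + 1) * Y))| ≤ 2 * (π * (8 / (π * X) ^ 3)) := hfin
    _ = 16 / (π ^ 2 * X ^ 3) := by
        rw [mul_pow]
        field_simp
        ring

lemma exp_pi_ge : (22:ℝ) ≤ Real.exp π := by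
  have h1 : (3.14:ℝ) ≤ π := by nlinarith [Real.pi_gt_d6]
  have h2 := Real.sum_le_exp_of_nonneg (show (0:ℝ) ≤ 3.14 by norm_num) 10
  have h3 : Real.exp 3.14 ≤ Real.exp π := Real.exp_le_exp.mpr h1
  refine le_trans (le_trans ?_ h2) h3
  simp only [Finset.sum_range_succ, Finset.sum_range_zero, Nat.factorial]
  norm_num

lemma exp_six {x : ℝ} (hx : 0 ≤ x) : x ^ 6 ≤ 720 * Real.exp x := by
  have h2 := Real.sum_le_exp_of_nonneg hx 7
  simp only [Finset.sum_range_succ, Finset.sum_range_zero, Nat.factorial] at h2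
  norm_num at h2
  nlinarith [pow_nonneg hx 2, pow_nonneg hx 3, pow_nonneg hx 4, pow_nonneg hx 5,
    mul_nonneg (mul_nonneg hx hx) hx, hx]

-- Dser at Y = 0 : series of negative exponential terms
lemma Dser_zero_eq {X : ℝ} :
    Dser X 0 = -2 * ∑' n : ℕ, π * ((n : ℝ) + 1) ^ 2 * Real.exp (-π * ((n : ℝ) + 1) ^ 2 * X) := by
  rw [Dser]
  have h1 : ∀ n : ℕ, (-π * ((n : ℝ) + 1) ^ 2 * Real.exp (-π * ((n : ℝ) + 1) ^ 2 * X)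
      * Real.cos (2 * π * ((n : ℝ) + 1) * 0))
      = -(π * ((n : ℝ) + 1) ^ 2 * Real.exp (-π * ((n : ℝ) + 1) ^ 2 * X)) := by
    intro n; rw [mul_zero, Real.cos_zero]; ring
  rw [tsum_congr h1, tsum_neg]
  ring

lemma Dser_comb {t : ℝ} (ht : 1 ≤ t) :
    2 * π * (10/11) * Real.exp (-(π * t)) ≤ 2 * Dser (2*t) 0 - Dser t 0 := by
  have ht0 : 0 < t := by linarith
  have h2t0 : 0 < 2 * t := by linarith
  have hS1 : Summable (fun n : ℕ => π * ((n : ℝ) + 1) ^ 2 * Real.exp (-π * ((n : ℝ) + 1) ^ 2 * t)) := by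
    refine ((summable_aux 2 ht0).mul_left π).congr (fun n => by ring)
  have hS2 : Summable (fun n : ℕ => π * ((n : ℝ) + 1) ^ 2
      * Real.exp (-π * ((n : ℝ) + 1) ^ 2 * (2*t))) := by
    refine ((summable_aux 2 h2t0).mul_left π).congr (fun n => by ring)
  rw [Dser_zero_eq, Dser_zero_eq]
  rw [show 2 * (-2 * ∑' n : ℕ, π * ((n : ℝ) + 1) ^ 2 * Real.exp (-π * ((n : ℝ) + 1) ^ 2 * (2*t)))
      - (-2 * ∑' n : ℕ, π * ((n : ℝ) + 1) ^ 2 * Real.exp (-π * ((n : ℝ) + 1) ^ 2 * t))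
      = 2 * ((∑' n : ℕ, π * ((n : ℝ) + 1) ^ 2 * Real.exp (-π * ((n : ℝ) + 1) ^ 2 * t))
        - 2 * ∑' n : ℕ, π * ((n : ℝ) + 1) ^ 2 * Real.exp (-π * ((n : ℝ) + 1) ^ 2 * (2*t))) from
      by ring]
  rw [← tsum_mul_left (a := (2:ℝ)), ← Summable.tsum_sub hS1 (hS2.mul_left 2)]
  set g : ℕ → ℝ := fun n => π * ((n : ℝ) + 1) ^ 2 * Real.exp (-π * ((n : ℝ) + 1) ^ 2 * t)
      - 2 * (π * ((n : ℝ) + 1) ^ 2 * Real.exp (-π * ((n : ℝ) + 1) ^ 2 * (2*t))) with hg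
  have hgsum : Summable g := hS1.sub (hS2.mul_left 2)
  have hkey : ∀ n : ℕ, 0 ≤ g n := by
    intro n
    rw [hg]
    simp only []
    have hc1 : (1:ℝ) ≤ ((n:ℝ)+1)^2 := by nlinarith [Nat.cast_nonneg (α := ℝ) n]
    have harg : 1 ≤ π * ((n : ℝ) + 1) ^ 2 * t := by
      have e1 : π ≤ π * ((n:ℝ)+1)^2 := by
        nlinarith [mul_nonneg Real.pi_pos.le (sub_nonneg.mpr hc1)]
      have e2 : π * ((n:ℝ)+1)^2 ≤ π * ((n:ℝ)+1)^2 * t := by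
        nlinarith [mul_nonneg (mul_nonneg Real.pi_pos.le (sq_nonneg ((n:ℝ)+1)))
          (sub_nonneg.mpr ht)]
      linarith [Real.pi_gt_three]
    have hhalf : Real.exp (-π * ((n : ℝ) + 1) ^ 2 * t) ≤ 1/2 := by
      rw [show -π * ((n : ℝ) + 1) ^ 2 * t = -(π * ((n : ℝ) + 1) ^ 2 * t) from by ring,
        Real.exp_neg]
      have : (2:ℝ) ≤ Real.exp (π * ((n : ℝ) + 1) ^ 2 * t) := by
        have := Real.add_one_le_exp (π * ((n : ℝ) + 1) ^ 2 * t)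
        linarith
      rw [inv_le_comm₀ (by positivity) (by norm_num)]
      norm_num
      linarith
    have hdouble : Real.exp (-π * ((n : ℝ) + 1) ^ 2 * (2*t))
        = Real.exp (-π * ((n : ℝ) + 1) ^ 2 * t) * Real.exp (-π * ((n : ℝ) + 1) ^ 2 * t) := by
      rw [← Real.exp_add]; congr 1; ring
    rw [hdouble]
    have he : 0 < Real.exp (-π * ((n : ℝ) + 1) ^ 2 * t) := Real.exp_pos _
    nlinarith [mul_pos (mul_pos Real.pi_pos (show (0:ℝ) < ((n:ℝ)+1)^2 by positivity)) he]
  have h0 : g 0 ≤ ∑' n, g n := Summable.le_tsum hgsum 0 (fun i _ => hkey i)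
  have hg0 : 2 * π * (10/11) * Real.exp (-(π * t)) ≤ 2 * g 0 := by
    rw [hg]
    simp only [Nat.cast_zero]
    norm_num
    have hd : Real.exp (-(π * (2 * t))) = Real.exp (-(π * t)) * Real.exp (-(π * t)) := by
      rw [← Real.exp_add]; congr 1; ring
    have hsmall : Real.exp (-(π * t)) ≤ 1/22 := by
      rw [Real.exp_neg, inv_le_comm₀ (by positivity) (by norm_num)]
      norm_num
      calc (22:ℝ) ≤ Real.exp π := exp_pi_ge
        _ ≤ Real.exp (π * t) := Real.exp_le_exp.mpr (by nlinarith [Real.pi_pos])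
    rw [hd]
    have he : 0 < Real.exp (-(π * t)) := Real.exp_pos _
    nlinarith [mul_nonneg (mul_pos Real.pi_pos he).le (sub_nonneg.mpr hsmall)]
  calc 2 * π * (10/11) * Real.exp (-(π * t)) ≤ 2 * g 0 := hg0
    _ ≤ 2 * ∑' n, g n := by linarith

lemma helper_ge {A v : ℝ} (hA : 0 ≤ A) (hv : |v| ≤ 1) : -A ≤ A * v := by
  nlinarith [mul_nonneg hA (by linarith [(abs_le.mp hv).1] : (0:ℝ) ≤ v + 1)]

lemma helper_le {A v : ℝ} (hA : 0 ≤ A) (hv : |v| ≤ 1) : A * v ≤ A := by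
  nlinarith [mul_nonneg hA (by linarith [(abs_le.mp hv).2] : (0:ℝ) ≤ 1 - v)]

set_option maxHeartbeats 1600000 in
lemma M3_bound (α y : ℝ) (hy : 2 ≤ y) (hα : y ≤ α) :
    M3 α y ≥ -(115 * α^2 * y * Real.exp (-π * α * y)) := by
  have hy0 : (0:ℝ) < y := by linarith
  have hα0 : (0:ℝ) < α := by linarith
  have hπ3 : (3:ℝ) < π := Real.pi_gt_three
  have hπ4 : π ≤ 3.15 := by linarith [Real.pi_lt_d2]
  have hαy : (4:ℝ) ≤ α * y := by nlinarith
  have hs2a : Real.sqrt 2 * Real.sqrt 2 = 2 := Real.mul_self_sqrt (by norm_num)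
  have hs2nn : 0 ≤ Real.sqrt 2 := Real.sqrt_nonneg 2
  have hs2u : Real.sqrt 2 ≤ (1.5:ℝ) := by nlinarith
  have he1 : (0:ℝ) < Real.exp (-π * α * y) := Real.exp_pos _
  have he2 : Real.exp (-2 * π * α * y) ≤ Real.exp (-π * α * y) := by
    apply Real.exp_le_exp.mpr
    nlinarith [mul_pos (mul_pos Real.pi_pos hα0) hy0]
  have he2' : (0:ℝ) < Real.exp (-2 * π * α * y) := Real.exp_pos _
  have hq1 : (0:ℝ) ≤ 1 + 2 * π * α * y := by nlinarith
  have hq2 : (0:ℝ) ≤ 1 + 4 * π * α * y := by nlinarith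
  have hv1 := vtheta_half_le (show (0:ℝ) < y / α by positivity)
  have hv2 := vtheta_half_le (show (0:ℝ) < y / (2 * α) by positivity)
  have hC1 : (0:ℝ) ≤ 4 * Real.sqrt 2 * α * (1 + 2 * π * α * y) * Real.exp (-π * α * y) :=
    by positivity
  have hC2 : (0:ℝ) ≤ 4 * α * (1 + 4 * π * α * y) * Real.exp (-2 * π * α * y) := by positivity
  have b1 := helper_ge hC1 hv1
  have b2 := helper_le hC2 hv2
  rw [M3]
  have hsum : 4 * Real.sqrt 2 * α * (1 + 2 * π * α * y) * Real.exp (-π * α * y)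
      + 4 * α * (1 + 4 * π * α * y) * Real.exp (-2 * π * α * y)
      ≤ 115 * α^2 * y * Real.exp (-π * α * y) := by
    have step1 : 4 * Real.sqrt 2 * α * (1 + 2 * π * α * y) * Real.exp (-π * α * y)
        ≤ 6 * (α * (1 + 2 * π * α * y) * Real.exp (-π * α * y)) := by
      have hz : (0:ℝ) ≤ α * (1 + 2 * π * α * y) * Real.exp (-π * α * y) := by positivity
      nlinarith [mul_nonneg hz (show (0:ℝ) ≤ 6 - 4 * Real.sqrt 2 by nlinarith)]
    have step2 : 4 * α * (1 + 4 * π * α * y) * Real.exp (-2 * π * α * y)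
        ≤ 4 * (α * (1 + 4 * π * α * y) * Real.exp (-π * α * y)) := by
      have hz : (0:ℝ) ≤ 4 * (α * (1 + 4 * π * α * y)) := by positivity
      nlinarith [mul_le_mul_of_nonneg_left he2 hz]
    have step3 : 6 * (α * (1 + 2 * π * α * y)) + 4 * (α * (1 + 4 * π * α * y))
        ≤ 115 * α^2 * y := by
      have p1 : 28 * π * (α^2 * y) ≤ 28 * 3.15 * (α^2 * y) := by
        have := mul_le_mul_of_nonneg_right hπ4 (show (0:ℝ) ≤ α^2 * y by positivity)
        nlinarith [this]
      have p2 : 10 * α ≤ 3 * α * (α * y) := by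
        nlinarith [mul_le_mul_of_nonneg_left hαy (show (0:ℝ) ≤ 3 * α by linarith)]
      nlinarith [p1, p2, mul_pos (mul_pos hα0 hα0) hy0]
    calc 4 * Real.sqrt 2 * α * (1 + 2 * π * α * y) * Real.exp (-π * α * y)
        + 4 * α * (1 + 4 * π * α * y) * Real.exp (-2 * π * α * y)
        ≤ 6 * (α * (1 + 2 * π * α * y) * Real.exp (-π * α * y))
          + 4 * (α * (1 + 4 * π * α * y) * Real.exp (-π * α * y)) := by
          linarith [step1, step2]
      _ = (6 * (α * (1 + 2 * π * α * y)) + 4 * (α * (1 + 4 * π * α * y)))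
          * Real.exp (-π * α * y) := by ring
      _ ≤ 115 * α^2 * y * Real.exp (-π * α * y) :=
          mul_le_mul_of_nonneg_right step3 he1.le
  linarith [b1, b2, hsum]

set_option maxHeartbeats 1600000 in
lemma M4_bound (α y : ℝ) (hy : 2 ≤ y) (hα : y ≤ α) :
    M4 α y ≥ -(21 * α^3 * Real.exp (-π * α * y)) := by
  have hy0 : (0:ℝ) < y := by linarith
  have hα0 : (0:ℝ) < α := by linarith
  have hπ3 : (3:ℝ) < π := Real.pi_gt_three
  have hs2a : Real.sqrt 2 * Real.sqrt 2 = 2 := Real.mul_self_sqrt (by norm_num)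
  have hs2nn : 0 ≤ Real.sqrt 2 := Real.sqrt_nonneg 2
  have hs2u : Real.sqrt 2 ≤ (1.5:ℝ) := by nlinarith
  have he1 : (0:ℝ) < Real.exp (-π * α * y) := Real.exp_pos _
  have he2 : Real.exp (-2 * π * α * y) ≤ Real.exp (-π * α * y) := by
    apply Real.exp_le_exp.mpr
    nlinarith [mul_pos (mul_pos Real.pi_pos hα0) hy0]
  have he2' : (0:ℝ) < Real.exp (-2 * π * α * y) := Real.exp_pos _
  have hyα : (0:ℝ) < y / α := by positivity
  have hy2α : (0:ℝ) < y / (2 * α) := by positivity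
  have hD1 := Dser_abs_le hyα (1/2)
  have hD2 := Dser_abs_le hy2α (1/2)
  -- numeric bounds on the Dser abs bounds
  have d1 : 16 / (π ^ 2 * (y/α) ^ 3) ≤ 2 * α^3 / y^3 := by
    rw [div_pow, div_le_div_iff₀ (by positivity) (by positivity)]
    have hπsq : (9:ℝ) ≤ π^2 := by nlinarith
    have h1 : (0:ℝ) ≤ y^3 * α^3 := by positivity
    calc 16 * y^3 = (16/9) * (9 * (y^3/α^3)) * α^3 := by field_simp
      _ ≤ 2 * α^3 * (π^2 * (y^3/α^3)) := by
          nlinarith [mul_nonneg (mul_nonneg (show (0:ℝ) ≤ y^3/α^3 by positivity)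
            (pow_pos hα0 3).le) (show (0:ℝ) ≤ π^2 - 9 by linarith),
            mul_nonneg (show (0:ℝ) ≤ y^3/α^3 by positivity) (pow_pos hα0 3).le]
  have d2 : 16 / (π ^ 2 * (y/(2*α)) ^ 3) ≤ 15 * α^3 / y^3 := by
    rw [div_pow, div_le_div_iff₀ (by positivity) (by positivity)]
    have hπsq : (9:ℝ) ≤ π^2 := by nlinarith
    calc 16 * y^3 = (128/9) * (9 * (y^3/(2*α)^3)) * α^3 := by field_simp; ring
      _ ≤ 15 * α^3 * (π^2 * (y^3/(2*α)^3)) := by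
          nlinarith [mul_nonneg (mul_nonneg (show (0:ℝ) ≤ y^3/(2*α)^3 by positivity)
            (pow_pos hα0 3).le) (show (0:ℝ) ≤ π^2 - 9 by linarith),
            mul_nonneg (show (0:ℝ) ≤ y^3/(2*α)^3 by positivity) (pow_pos hα0 3).le]
  have a1 : -(2 * α^3 / y^3) ≤ Dser (y/α) (1/2) := by
    have := (abs_le.mp hD1).1
    linarith [d1]
  have a2 : Dser (y/(2*α)) (1/2) ≤ 15 * α^3 / y^3 := by
    linarith [(abs_le.mp hD2).2, d2]
  have a2' : -(15 * α^3 / y^3) ≤ Dser (y/(2*α)) (1/2) := by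
    linarith [(abs_le.mp hD2).1, d2]
  rw [M4, vthetaX_eq hyα, vthetaX_eq hy2α]
  have hq : (0:ℝ) < α^3 / y^3 := by positivity
  have s1 : 8 * Real.sqrt 2 * y * Real.exp (-π * α * y) * Dser (y/α) (1/2)
      ≥ -(24 * y * Real.exp (-π * α * y) * (α^3 / y^3)) := by
    have hc : (0:ℝ) ≤ 8 * Real.sqrt 2 * y * Real.exp (-π * α * y) := by positivity
    have := mul_le_mul_of_nonneg_left a1 hc
    have hZ : (0:ℝ) ≤ 16 * y * Real.exp (-π * α * y) * (α^3/y^3) := by positivity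
    have h12 : 8 * Real.sqrt 2 * y * Real.exp (-π * α * y) * (2 * α^3/y^3)
        ≤ 24 * y * Real.exp (-π * α * y) * (α^3/y^3) := by
      calc 8 * Real.sqrt 2 * y * Real.exp (-π * α * y) * (2 * α^3/y^3)
          = Real.sqrt 2 * (16 * y * Real.exp (-π * α * y) * (α^3/y^3)) := by ring
        _ ≤ 1.5 * (16 * y * Real.exp (-π * α * y) * (α^3/y^3)) :=
            mul_le_mul_of_nonneg_right hs2u hZ
        _ = 24 * y * Real.exp (-π * α * y) * (α^3/y^3) := by ring
    linarith [this, h12]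
  have s2 : 4 * y * Real.exp (-2 * π * α * y) * Dser (y/(2*α)) (1/2)
      ≤ 60 * y * Real.exp (-π * α * y) * (α^3 / y^3) := by
    have hc : (0:ℝ) ≤ 4 * y * Real.exp (-2 * π * α * y) := by positivity
    have h1 := mul_le_mul_of_nonneg_left a2 hc
    have h2 : 4 * y * Real.exp (-2 * π * α * y) * (15 * α^3/y^3)
        ≤ 60 * y * Real.exp (-π * α * y) * (α^3/y^3) := by
      have hh := mul_le_mul_of_nonneg_right he2
        (show (0:ℝ) ≤ 60 * y * (α^3/y^3) by positivity)
      calc 4 * y * Real.exp (-2 * π * α * y) * (15 * α^3/y^3)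
          = Real.exp (-2 * π * α * y) * (60 * y * (α^3/y^3)) := by ring
        _ ≤ Real.exp (-π * α * y) * (60 * y * (α^3/y^3)) := hh
        _ = 60 * y * Real.exp (-π * α * y) * (α^3/y^3) := by ring
    linarith
  have hfin : 24 * y * Real.exp (-π * α * y) * (α^3 / y^3)
      + 60 * y * Real.exp (-π * α * y) * (α^3 / y^3) ≤ 21 * α^3 * Real.exp (-π * α * y) := by
    have h1 : 84 * y * (α^3 / y^3) ≤ 21 * α^3 := by
      rw [div_eq_mul_inv]
      have hy2 : (4:ℝ) ≤ y^2 := by nlinarith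
      have : 84 * y * (α^3 * (y^3)⁻¹) = 84 * α^3 / y^2 := by
        field_simp
      rw [this, div_le_iff₀ (by positivity)]
      nlinarith [pow_pos hα0 3, mul_le_mul_of_nonneg_left hy2 (show (0:ℝ) ≤ 21 * α^3 by positivity)]
    linarith [mul_le_mul_of_nonneg_right h1 he1.le]
  linarith [s1, s2, hfin]

set_option maxHeartbeats 1600000 in
/-- For `α ≥ y ≥ 2`, `M(α;y) ≥ 10π·α^{5/2}·y^{−3/2}·e^{−πα/y}`. -/
theorem M_lower_bound_case2 (α y : ℝ) (hy : 2 ≤ y) (hα : y ≤ α) :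
    Mfun α y ≥ 10 * π * α ^ ((5 : ℝ) / 2) * y ^ (-(3 : ℝ) / 2) * Real.exp (-π * α / y) := by
  have hy0 : (0:ℝ) < y := by linarith
  have hα0 : (0:ℝ) < α := by linarith
  have hα2 : (2:ℝ) ≤ α := le_trans hy hα
  set t : ℝ := α / y with hts
  have ht0 : 0 < t := by positivity
  have ht1 : 1 ≤ t := (one_le_div hy0).mpr hα
  have hst1 : 1 ≤ Real.sqrt t := by
    rw [show (1:ℝ) = Real.sqrt 1 from (Real.sqrt_one).symm]
    exact Real.sqrt_le_sqrt ht1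
  have hst0 : 0 < Real.sqrt t := by linarith
  set E : ℝ := Real.exp (-(π * t)) with hE
  have hE0 : 0 < E := Real.exp_pos _
  set B : ℝ := Real.exp (-π * α * y) with hB
  have hB0 : 0 < B := Real.exp_pos _
  set w : ℝ := y * t ^ 2 * Real.sqrt t with hw
  have ht2 : 1 ≤ t ^ 2 := by nlinarith
  have hw2 : 2 ≤ w := by
    have h2 : 1 ≤ t ^ 2 * Real.sqrt t := by nlinarith
    calc (2:ℝ) = 2 * 1 := by ring
      _ ≤ y * (t ^ 2 * Real.sqrt t) := mul_le_mul hy h2 (by norm_num) (by linarith)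
      _ = w := by rw [hw]; ring
  have hw0 : 0 < w := by linarith
  have hs2a : Real.sqrt 2 * Real.sqrt 2 = 2 := Real.mul_self_sqrt (by norm_num)
  have hs2nn : 0 ≤ Real.sqrt 2 := Real.sqrt_nonneg 2
  have hs2l : (1.41421:ℝ) ≤ Real.sqrt 2 := by nlinarith
  have hπ3 : (3:ℝ) < π := Real.pi_gt_three
  -- RHS rewriting
  have hrpow : α ^ ((5 : ℝ) / 2) * y ^ (-(3 : ℝ) / 2) = w := by
    have hαyt : α = y * t := by rw [hts]; field_simp
    have h5 : α ^ ((5:ℝ)/2) = α^2 * Real.sqrt α := by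
      rw [show ((5:ℝ)/2) = ((2:ℕ):ℝ) + (1/2 : ℝ) from by norm_num, Real.rpow_add hα0,
        Real.rpow_natCast, ← Real.sqrt_eq_rpow]
    have h3 : y ^ (-(3:ℝ)/2) = 1 / (y * Real.sqrt y) := by
      rw [show (-(3:ℝ)/2) = -(((1:ℕ):ℝ) + (1/2 : ℝ)) from by norm_num, Real.rpow_neg hy0.le,
        Real.rpow_add hy0, Real.rpow_natCast, ← Real.sqrt_eq_rpow, pow_one]
      rw [one_div]
    have hsy : 0 < Real.sqrt y := Real.sqrt_pos.mpr hy0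
    have hsy2 : Real.sqrt y * Real.sqrt y = y := Real.mul_self_sqrt hy0.le
    have hsα : Real.sqrt α = Real.sqrt y * Real.sqrt t := by
      rw [hαyt, Real.sqrt_mul hy0.le]
    rw [h5, h3, hsα, hαyt, hw]
    field_simp
  have hEeq : Real.exp (-π * α / y) = E := by
    rw [hE]
    congr 1
    rw [hts]
    ring
  rw [ge_iff_le, hEeq, show 10 * π * α ^ ((5 : ℝ) / 2) * y ^ (-(3 : ℝ) / 2) * E
      = 10 * π * (α ^ ((5 : ℝ) / 2) * y ^ (-(3 : ℝ) / 2)) * E from by ring, hrpow]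
  -- lower bound on M1 + M2
  have hM12 : M1 α y + M2 α y ≥ (80/11) * Real.sqrt 2 * π * w * E := by
    rw [M12_eq α y hy0 hα0, ← hts]
    have h1 := Dser_comb ht1
    have h2 : 0 ≤ 4 * Real.sqrt 2 * y * t ^ 2 * Real.sqrt t := by positivity
    calc 4 * Real.sqrt 2 * y * t ^ 2 * Real.sqrt t * (2 * Dser (2*t) 0 - Dser t 0)
        ≥ 4 * Real.sqrt 2 * y * t ^ 2 * Real.sqrt t * (2 * π * (10/11) * E) :=
          mul_le_mul_of_nonneg_left h1 h2
      _ = (80/11) * Real.sqrt 2 * π * w * E := by rw [hw]; ring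
  have hM3 := M3_bound α y hy hα
  have hM4 := M4_bound α y hy hα
  rw [← hB] at hM3 hM4
  -- exponential comparison : B ≤ E * exp (-(9/2 * α))
  have hkey1 : B ≤ E * Real.exp (-(9/2 * α)) := by
    rw [hB, hE, ← Real.exp_add]
    apply Real.exp_le_exp.mpr
    have hty : t * y = α := by rw [hts]; field_simp
    have hyy : (0:ℝ) ≤ (π - 3) * (y^2 - 1) := by
      apply mul_nonneg (by linarith)
      nlinarith
    have hinner : (0:ℝ) ≤ π * (y^2 - 1) - 9/2 * y := by nlinarith [sq_nonneg (y - 2)]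
    have hmul : (0:ℝ) ≤ t * (π * (y^2 - 1) - 9/2 * y) := mul_nonneg ht0.le hinner
    nlinarith [hmul, hty]
  -- numeric: 136 α³ exp(-(9/2)α) ≤ 1.7
  have hkey2 : 136 * α^3 * Real.exp (-(9/2 * α)) ≤ 1.7 := by
    have h6 := exp_six (show (0:ℝ) ≤ 9/2 * α by positivity)
    have hα3 : (8:ℝ) ≤ α^3 := by nlinarith
    have hmain : 136 * α^3 ≤ 1.7 * Real.exp (9/2 * α) := by
      nlinarith [h6, hα3, sq_nonneg (α^3 - 8), pow_pos hα0 3]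
    have hid : Real.exp (-(9/2 * α)) * Real.exp (9/2 * α) = 1 := by
      rw [← Real.exp_add]; norm_num
    have hep : 0 < Real.exp (9/2 * α) := Real.exp_pos _
    calc 136 * α^3 * Real.exp (-(9/2 * α))
        ≤ 1.7 * Real.exp (9/2 * α) * Real.exp (-(9/2 * α)) := by
          apply mul_le_mul_of_nonneg_right hmain (Real.exp_pos _).le
      _ = 1.7 := by rw [mul_assoc, mul_comm (Real.exp (9/2 * α)), hid, mul_one]
  -- numeric: 1.7 ≤ ((80/11)√2 - 10) π w
  have hkey3 : (1.7:ℝ) ≤ ((80/11) * Real.sqrt 2 - 10) * π * w := by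
    have hc : (0.285:ℝ) ≤ (80/11) * Real.sqrt 2 - 10 := by nlinarith
    have h1 : (0.285:ℝ) * 3 ≤ ((80/11) * Real.sqrt 2 - 10) * π :=
      mul_le_mul hc hπ3.le (by norm_num) (by linarith)
    have h2 : (0.285:ℝ) * 3 * 2 ≤ ((80/11) * Real.sqrt 2 - 10) * π * w :=
      mul_le_mul h1 hw2 (by norm_num) (by nlinarith)
    linarith
  -- assemble
  have hs : 115 * α^2 * y * B + 21 * α^3 * B ≤ 136 * α^3 * B := by
    have h1 : α^2 * y ≤ α^3 := by nlinarith [sq_nonneg α]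
    nlinarith [hB0, h1]
  have hfin : 136 * α^3 * B ≤ ((80/11) * Real.sqrt 2 - 10) * π * w * E := by
    calc 136 * α^3 * B ≤ 136 * α^3 * (E * Real.exp (-(9/2 * α))) := by
          apply mul_le_mul_of_nonneg_left hkey1 (by positivity)
      _ = (136 * α^3 * Real.exp (-(9/2 * α))) * E := by ring
      _ ≤ 1.7 * E := mul_le_mul_of_nonneg_right hkey2 hE0.le
      _ ≤ (((80/11) * Real.sqrt 2 - 10) * π * w) * E := mul_le_mul_of_nonneg_right hkey3 hE0.le
      _ = ((80/11) * Real.sqrt 2 - 10) * π * w * E := by ring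
  have : Mfun α y = (M1 α y + M2 α y) + M3 α y + M4 α y := by rw [Mfun]
  rw [this]
  have hgoal : 10 * π * w * E ≤ (80/11) * Real.sqrt 2 * π * w * E
      - 115 * α^2 * y * B - 21 * α^3 * B := by
    have := hs.trans hfin
    linarith
  linarith [hM12, hM3, hM4, hgoal]
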